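/- arXiv:1203.1209 — 4 statements merged into one kernel-verified Lean document; each statement's English description precedes it below -/
import Mathlib

section
/- Let N ≥ 2, h > 0, and let L₋, L₊ : ℝ³ × ℝ₊* → ℝ be C¹ Lagrangians. Define the discrete Lagrangian functional L^T(Q) = h ∑_{p=1}^{N} L₋(Q_p, (Δ₋Q)_p, t_p, h) + h ∑_{p=0}^{N-1} L₊(Q_p, (-Δ₊Q)_p, t_p, h) on ℝ^{N+1}, where t_p = t_0 + p·h. Then Q ∈ ℝ^{N+1} satisfies D L^T(Q)(W) = 0 for all W ∈ ℝ^{N+1} with W_0 = W_N = 0 if and only if for all p = 1,…,N-1: ∂L₋/∂x(Q_p,(Δ₋Q)_p,t_p,h) + ∂L₊/∂x(Q_p,(-Δ₊Q)_p,t_p,h) + (Δ₊(∂L₋/∂v(Q,Δ₋Q,T,h)))_p − (Δ₋(∂L₊/∂v(Q,-Δ₊Q,T,h)))_p = 0. -/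
open Finset

/-- Backward difference `(Δ₋ Q)_p = (Q_p - Q_{p-1})/h`. -/
noncomputable def bD (h : ℝ) (Q : ℕ → ℝ) (p : ℕ) : ℝ := (Q p - Q (p - 1)) / h

/-- Minus forward difference `(-Δ₊ Q)_p = (Q_{p+1} - Q_p)/h`. -/
noncomputable def fD (h : ℝ) (Q : ℕ → ℝ) (p : ℕ) : ℝ := (Q (p + 1) - Q p) / h

lemma hasDerivAt_partial (L : ℝ → ℝ → ℝ → ℝ → ℝ)
    (hL : ContDiff ℝ 1 (fun v : ℝ × ℝ × ℝ × ℝ => L v.1 v.2.1 v.2.2.1 v.2.2.2))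
    (x y t k a b : ℝ) :
    HasDerivAt (fun s => L (x + s * a) (y + s * b) t k)
      (a * deriv (fun x' => L x' y t k) x + b * deriv (fun v => L x v t k) y) 0 := by
  set F := (fun v : ℝ × ℝ × ℝ × ℝ => L v.1 v.2.1 v.2.2.1 v.2.2.2) with hF
  have hFd : DifferentiableAt ℝ F (x, y, t, k) :=
    (hL.differentiable one_ne_zero).differentiableAt
  have h1 : HasDerivAt (fun s : ℝ => x + s * a) a 0 := by
    simpa using ((hasDerivAt_id (0:ℝ)).mul_const a).const_add x
  have h2 : HasDerivAt (fun s : ℝ => y + s * b) b 0 := by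
    simpa using ((hasDerivAt_id (0:ℝ)).mul_const b).const_add y
  have hc : HasDerivAt (fun s : ℝ => ((x + s * a, y + s * b, t, k) : ℝ × ℝ × ℝ × ℝ))
      ((a, b, 0, 0)) 0 :=
    HasDerivAt.prodMk h1 (HasDerivAt.prodMk h2 (HasDerivAt.prodMk (hasDerivAt_const 0 t) (hasDerivAt_const 0 k)))
  have hmain : HasDerivAt (fun s => L (x + s * a) (y + s * b) t k)
      (fderiv ℝ F (x, y, t, k) (a, b, 0, 0)) 0 := by
    have h0 : ((x + 0 * a, y + 0 * b, t, k) : ℝ × ℝ × ℝ × ℝ) = (x, y, t, k) := by norm_num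
    have hF0 : HasFDerivAt F (fderiv ℝ F (x, y, t, k)) (x + 0 * a, y + 0 * b, t, k) := by
      rw [h0]; exact hFd.hasFDerivAt
    exact hF0.comp_hasDerivAt 0 hc
  have hx : deriv (fun x' => L x' y t k) x = fderiv ℝ F (x, y, t, k) (1, 0, 0, 0) := by
    have hcx : HasDerivAt (fun x' : ℝ => ((x', y, t, k) : ℝ × ℝ × ℝ × ℝ))
        ((1, 0, 0, 0)) x :=
      HasDerivAt.prodMk (hasDerivAt_id x) (hasDerivAt_const x (y, t, k))
    exact (hFd.hasFDerivAt.comp_hasDerivAt x hcx).deriv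
  have hy : deriv (fun v => L x v t k) y = fderiv ℝ F (x, y, t, k) (0, 1, 0, 0) := by
    have hcy : HasDerivAt (fun v : ℝ => ((x, v, t, k) : ℝ × ℝ × ℝ × ℝ))
        ((0, 1, 0, 0)) y :=
      HasDerivAt.prodMk (hasDerivAt_const y x) (HasDerivAt.prodMk (hasDerivAt_id y) (hasDerivAt_const y (t, k)))
    exact (hFd.hasFDerivAt.comp_hasDerivAt y hcy).deriv
  have hlin : ((a, b, 0, 0) : ℝ × ℝ × ℝ × ℝ)
      = a • ((1, 0, 0, 0) : ℝ × ℝ × ℝ × ℝ) + b • ((0, 1, 0, 0) : ℝ × ℝ × ℝ × ℝ) := by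
    simp [Prod.ext_iff]
  rw [hx, hy]
  convert hmain using 1
  rw [hlin, map_add, map_smul, map_smul]
  simp [smul_eq_mul]

lemma sbp1 (M : ℕ) (B W : ℕ → ℝ) :
    ∑ p ∈ Icc 1 (M + 1), B p * (W p - W (p - 1)) =
      ∑ p ∈ Icc 1 M, (B p - B (p + 1)) * W p + B (M + 1) * W (M + 1) - B 1 * W 0 := by
  induction M with
  | zero => simp; ring
  | succ M ih =>
    rw [Finset.sum_Icc_succ_top (by omega : 1 ≤ M + 1 + 1), ih,
      Finset.sum_Icc_succ_top (by omega : 1 ≤ M + 1)]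
    simp only [Nat.add_sub_cancel]
    ring

lemma sbp2 (M : ℕ) (D W : ℕ → ℝ) :
    ∑ p ∈ Finset.range (M + 1), D p * (W (p + 1) - W p) =
      ∑ p ∈ Icc 1 M, (D (p - 1) - D p) * W p + D M * W (M + 1) - D 0 * W 0 := by
  induction M with
  | zero => simp; ring
  | succ M ih =>
    rw [Finset.sum_range_succ, ih, Finset.sum_Icc_succ_top (by omega : 1 ≤ M + 1)]
    simp only [Nat.add_sub_cancel]
    ring

lemma sC (M : ℕ) (C : ℕ → ℝ) :
    ∑ p ∈ Finset.range (M + 1), C p = C 0 + ∑ p ∈ Icc 1 M, C p := by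
  rw [Finset.range_eq_Ico, Finset.sum_eq_sum_Ico_succ_bot (by omega), Finset.Ico_add_one_right_eq_Icc, Nat.zero_add]

lemma combine (M : ℕ) (h : ℝ) (hh : h ≠ 0) (A B C D W : ℕ → ℝ)
    (hW0 : W 0 = 0) (hWN : W (M + 1) = 0) :
    h * ∑ p ∈ Icc 1 (M + 1), (W p * A p + (W p - W (p - 1)) / h * B p)
      + h * ∑ p ∈ Finset.range (M + 1), (W p * C p + (W (p + 1) - W p) / h * D p)
    = ∑ p ∈ Icc 1 M, (h * (A p + C p) + (B p - B (p + 1)) - (D p - D (p - 1))) * W p := by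
  have e1 : ∀ p, h * (W p * A p + (W p - W (p - 1)) / h * B p)
      = (h * A p) * W p + B p * (W p - W (p - 1)) := by
    intro p; field_simp
  have e2 : ∀ p, h * (W p * C p + (W (p + 1) - W p) / h * D p)
      = (h * C p) * W p + D p * (W (p + 1) - W p) := by
    intro p; field_simp
  have hR : ∑ p ∈ Icc 1 M, (h * (A p + C p) + (B p - B (p + 1)) - (D p - D (p - 1))) * W p
      = (∑ p ∈ Icc 1 M, (h * A p) * W p + ∑ p ∈ Icc 1 M, (B p - B (p + 1)) * W p)
        + (∑ p ∈ Icc 1 M, (h * C p) * W p + ∑ p ∈ Icc 1 M, (D (p - 1) - D p) * W p) := by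
    rw [← Finset.sum_add_distrib, ← Finset.sum_add_distrib, ← Finset.sum_add_distrib]
    exact Finset.sum_congr rfl fun p _ => by ring
  rw [Finset.mul_sum, Finset.mul_sum,
    Finset.sum_congr rfl fun p _ => e1 p, Finset.sum_congr rfl fun p _ => e2 p,
    Finset.sum_add_distrib, Finset.sum_add_distrib,
    sbp1 M B W, sbp2 M D W,
    Finset.sum_Icc_succ_top (by omega : 1 ≤ M + 1) (fun p => (h * A p) * W p),
    sC M (fun p => (h * C p) * W p), hR, hW0, hWN]
  ring

lemma deriv_action (N : ℕ) (h : ℝ) (t0 : ℝ) (Lm Lp : ℝ → ℝ → ℝ → ℝ → ℝ)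
    (hLm : ContDiff ℝ 1 (fun v : ℝ × ℝ × ℝ × ℝ => Lm v.1 v.2.1 v.2.2.1 v.2.2.2))
    (hLp : ContDiff ℝ 1 (fun v : ℝ × ℝ × ℝ × ℝ => Lp v.1 v.2.1 v.2.2.1 v.2.2.2))
    (Q W : ℕ → ℝ) :
    deriv (fun s : ℝ =>
        h * ∑ p ∈ Finset.Icc 1 N,
              Lm (Q p + s * W p) (bD h (fun i => Q i + s * W i) p) (t0 + p * h) h
        + h * ∑ p ∈ Finset.range N,
              Lp (Q p + s * W p) (fD h (fun i => Q i + s * W i) p) (t0 + p * h) h) 0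
    = h * ∑ p ∈ Icc 1 N, (W p * deriv (fun x => Lm x (bD h Q p) (t0 + p * h) h) (Q p)
          + (W p - W (p - 1)) / h * deriv (fun v => Lm (Q p) v (t0 + p * h) h) (bD h Q p))
      + h * ∑ p ∈ Finset.range N, (W p * deriv (fun x => Lp x (fD h Q p) (t0 + p * h) h) (Q p)
          + (W (p + 1) - W p) / h * deriv (fun v => Lp (Q p) v (t0 + p * h) h) (fD h Q p)) := by
  have Hm : ∀ p ∈ Icc 1 N, HasDerivAt
      (fun s : ℝ => Lm (Q p + s * W p) (bD h (fun i => Q i + s * W i) p) (t0 + p * h) h)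
      (W p * deriv (fun x => Lm x (bD h Q p) (t0 + p * h) h) (Q p)
        + (W p - W (p - 1)) / h * deriv (fun v => Lm (Q p) v (t0 + p * h) h) (bD h Q p)) 0 := by
    intro p _
    have e : (fun s : ℝ => Lm (Q p + s * W p) (bD h (fun i => Q i + s * W i) p) (t0 + p * h) h)
        = fun s : ℝ => Lm (Q p + s * W p) (bD h Q p + s * ((W p - W (p - 1)) / h)) (t0 + p * h) h := by
      funext s
      have e2 : bD h (fun i => Q i + s * W i) p = bD h Q p + s * ((W p - W (p - 1)) / h) := by
        simp only [bD]; ring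
      rw [e2]
    rw [e]
    exact hasDerivAt_partial Lm hLm (Q p) (bD h Q p) (t0 + p * h) h (W p) ((W p - W (p - 1)) / h)
  have Hp : ∀ p ∈ Finset.range N, HasDerivAt
      (fun s : ℝ => Lp (Q p + s * W p) (fD h (fun i => Q i + s * W i) p) (t0 + p * h) h)
      (W p * deriv (fun x => Lp x (fD h Q p) (t0 + p * h) h) (Q p)
        + (W (p + 1) - W p) / h * deriv (fun v => Lp (Q p) v (t0 + p * h) h) (fD h Q p)) 0 := by
    intro p _
    have e : (fun s : ℝ => Lp (Q p + s * W p) (fD h (fun i => Q i + s * W i) p) (t0 + p * h) h)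
        = fun s : ℝ => Lp (Q p + s * W p) (fD h Q p + s * ((W (p + 1) - W p) / h)) (t0 + p * h) h := by
      funext s
      have e2 : fD h (fun i => Q i + s * W i) p = fD h Q p + s * ((W (p + 1) - W p) / h) := by
        simp only [fD]; ring
      rw [e2]
    rw [e]
    exact hasDerivAt_partial Lp hLp (Q p) (fD h Q p) (t0 + p * h) h (W p) ((W (p + 1) - W p) / h)
  exact (((HasDerivAt.fun_sum Hm).const_mul h).add ((HasDerivAt.fun_sum Hp).const_mul h)).deriv

/-- Discrete Euler-Lagrange characterization of discrete critical points. -/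
theorem discrete_euler_lagrange (N : ℕ) (hN : 2 ≤ N) (h : ℝ) (hh : 0 < h) (t0 : ℝ)
    (Lm Lp : ℝ → ℝ → ℝ → ℝ → ℝ)
    (hLm : ContDiff ℝ 1 (fun v : ℝ × ℝ × ℝ × ℝ => Lm v.1 v.2.1 v.2.2.1 v.2.2.2))
    (hLp : ContDiff ℝ 1 (fun v : ℝ × ℝ × ℝ × ℝ => Lp v.1 v.2.1 v.2.2.1 v.2.2.2))
    (Q : ℕ → ℝ) :
    (∀ W : ℕ → ℝ, W 0 = 0 → W N = 0 →
      deriv (fun s : ℝ =>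
        h * ∑ p ∈ Finset.Icc 1 N,
              Lm (Q p + s * W p) (bD h (fun i => Q i + s * W i) p) (t0 + p * h) h
        + h * ∑ p ∈ Finset.range N,
              Lp (Q p + s * W p) (fD h (fun i => Q i + s * W i) p) (t0 + p * h) h) 0 = 0)
    ↔ (∀ p ∈ Finset.Icc 1 (N - 1),
        deriv (fun x => Lm x (bD h Q p) (t0 + p * h) h) (Q p)
        + deriv (fun x => Lp x (fD h Q p) (t0 + p * h) h) (Q p)
        + (deriv (fun v => Lm (Q p) v (t0 + p * h) h) (bD h Q p)
            - deriv (fun v => Lm (Q (p + 1)) v (t0 + (p + 1 : ℕ) * h) h) (bD h Q (p + 1))) / h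
        - (deriv (fun v => Lp (Q p) v (t0 + p * h) h) (fD h Q p)
            - deriv (fun v => Lp (Q (p - 1)) v (t0 + ((p : ℝ) - 1) * h) h) (fD h Q (p - 1))) / h
        = 0) := by
  obtain ⟨M, rfl⟩ : ∃ M, N = M + 1 := ⟨N - 1, by omega⟩
  have hM : 1 ≤ M := by omega
  have hne : h ≠ 0 := hh.ne'
  set A : ℕ → ℝ := fun p => deriv (fun x => Lm x (bD h Q p) (t0 + p * h) h) (Q p) with hA
  set B : ℕ → ℝ := fun p => deriv (fun v => Lm (Q p) v (t0 + p * h) h) (bD h Q p) with hB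
  set C : ℕ → ℝ := fun p => deriv (fun x => Lp x (fD h Q p) (t0 + p * h) h) (Q p) with hC
  set D : ℕ → ℝ := fun p => deriv (fun v => Lp (Q p) v (t0 + p * h) h) (fD h Q p) with hD
  have key : ∀ W : ℕ → ℝ, W 0 = 0 → W (M + 1) = 0 →
      deriv (fun s : ℝ =>
        h * ∑ p ∈ Finset.Icc 1 (M + 1),
              Lm (Q p + s * W p) (bD h (fun i => Q i + s * W i) p) (t0 + p * h) h
        + h * ∑ p ∈ Finset.range (M + 1),
              Lp (Q p + s * W p) (fD h (fun i => Q i + s * W i) p) (t0 + p * h) h) 0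
      = ∑ p ∈ Icc 1 M, (h * (A p + C p) + (B p - B (p + 1)) - (D p - D (p - 1))) * W p := by
    intro W hW0 hWN
    rw [deriv_action (M + 1) h t0 Lm Lp hLm hLp Q W]
    exact combine M h hne A B C D W hW0 hWN
  have hcast : ∀ p : ℕ, 1 ≤ p → ((p : ℝ) - 1) = ((p - 1 : ℕ) : ℝ) := by
    intro p hp; rw [Nat.cast_sub hp]; norm_num
  constructor
  · intro H p hp
    rw [Finset.mem_Icc, Nat.add_sub_cancel] at hp
    set W : ℕ → ℝ := fun i => if i = p then (1 : ℝ) else 0 with hW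
    have hW0 : W 0 = 0 := if_neg (by omega)
    have hWN : W (M + 1) = 0 := if_neg (by omega)
    have hz := H W hW0 hWN
    rw [key W hW0 hWN] at hz
    rw [Finset.sum_eq_single_of_mem p (Finset.mem_Icc.mpr hp)
      (fun b _ hb => by simp [hW, hb])] at hz
    simp only [hW, if_pos rfl, mul_one] at hz
    rw [hcast p hp.1]
    have : h * (A p + C p) + (B p - B (p + 1)) - (D p - D (p - 1)) = 0 := hz
    rw [hA, hB, hC, hD] at this
    simp only [Nat.cast_add, Nat.cast_one] at this
    simp only [Nat.cast_add, Nat.cast_one]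
    have e : ∀ a c b d : ℝ, h * (a + c) + b - d = 0 → a + c + b / h - d / h = 0 := by
      intro a c b d H; field_simp; linarith
    exact e _ _ _ _ this
  · intro H W hW0 hWN
    rw [key W hW0 hWN]
    apply Finset.sum_eq_zero
    intro p hp
    rw [Finset.mem_Icc] at hp
    have hEL := H p (by rw [Finset.mem_Icc, Nat.add_sub_cancel]; exact hp)
    rw [hcast p hp.1] at hEL
    have hz : h * (A p + C p) + (B p - B (p + 1)) - (D p - D (p - 1)) = 0 := by
      rw [hA, hB, hC, hD]
      simp only [Nat.cast_add, Nat.cast_one]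
      simp only [Nat.cast_add, Nat.cast_one] at hEL
      have e : ∀ a c b d : ℝ, a + c + b / h - d / h = 0 → h * (a + c) + b - d = 0 := by
        intro a c b d H; field_simp at H; linarith
      exact e _ _ _ _ hEL
    rw [hz, zero_mul]
end

section
/- Let h > 0, N ≥ 4 and P̄ : ℝ⁵ × ℝ₊* → ℝ be C¹, with associated second order finite differences operator P^T_p(Q) = P̄(Q_p,(Δ₋Q)_p,(-Δ₊Q)_p,(-Δ₊∘Δ₋Q)_p,t_p,h). For Q ∈ ℝ^{N+1}, the Fréchet derivative DP^T(Q) is self-adjoint (i.e. h∑_{p=1}^{N-1} DP^T_p(Q)(W) Z_p = h∑_{p=1}^{N-1} DP^T_p(Q)(Z) W_p for all W, Z ∈ ℝ^{N+1} vanishing at indices 0, 1, N-1, N) for all Q and all admissible partitions if and only if P̄ satisfies the discrete Helmholtz condition: for all admissible Q and all p = 2,…,N-1, (Δ₋ (∂P̄/∂w(⋆)))_p = ∂P̄/∂v₋(⋆_p) + ∂P̄/∂v₊(⋆_{p-1}). -/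
/-- Centered second difference `(-Δ₊ ∘ Δ₋ Q)_p = (Q_{p+1} - 2Q_p + Q_{p-1})/h²`. -/
noncomputable def cD (h : ℝ) (Q : ℕ → ℝ) (p : ℕ) : ℝ :=
  (Q (p + 1) - 2 * Q p + Q (p - 1)) / h ^ 2

/-- Componentwise Fréchet derivative of the finite differences operator
associated to `P` at `Q` in direction `W`. -/
noncomputable def DP (P : ℝ → ℝ → ℝ → ℝ → ℝ → ℝ → ℝ) (h t0 : ℝ) (Q W : ℕ → ℝ)
    (p : ℕ) : ℝ :=
  deriv (fun s : ℝ => P (Q p + s * W p)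
    (bD h (fun i => Q i + s * W i) p)
    (fD h (fun i => Q i + s * W i) p)
    (cD h (fun i => Q i + s * W i) p)
    (t0 + p * h) h) 0

namespace SAH

abbrev E := ℝ × ℝ × ℝ × ℝ × ℝ × ℝ

noncomputable def Fu (P : ℝ → ℝ → ℝ → ℝ → ℝ → ℝ → ℝ) : E → ℝ :=
  fun v => P v.1 v.2.1 v.2.2.1 v.2.2.2.1 v.2.2.2.2.1 v.2.2.2.2.2

noncomputable def pA (P : ℝ → ℝ → ℝ → ℝ → ℝ → ℝ → ℝ) (x1 x2 x3 x4 x5 x6 : ℝ) : ℝ :=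
  fderiv ℝ (Fu P) (x1,x2,x3,x4,x5,x6) (1,0,0,0,0,0)
noncomputable def pB (P : ℝ → ℝ → ℝ → ℝ → ℝ → ℝ → ℝ) (x1 x2 x3 x4 x5 x6 : ℝ) : ℝ :=
  fderiv ℝ (Fu P) (x1,x2,x3,x4,x5,x6) (0,1,0,0,0,0)
noncomputable def pC (P : ℝ → ℝ → ℝ → ℝ → ℝ → ℝ → ℝ) (x1 x2 x3 x4 x5 x6 : ℝ) : ℝ :=
  fderiv ℝ (Fu P) (x1,x2,x3,x4,x5,x6) (0,0,1,0,0,0)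
noncomputable def pD (P : ℝ → ℝ → ℝ → ℝ → ℝ → ℝ → ℝ) (x1 x2 x3 x4 x5 x6 : ℝ) : ℝ :=
  fderiv ℝ (Fu P) (x1,x2,x3,x4,x5,x6) (0,0,0,1,0,0)

variable {P : ℝ → ℝ → ℝ → ℝ → ℝ → ℝ → ℝ}

lemma key_hasDerivAt (hP : ContDiff ℝ 1 (Fu P)) {g : ℝ → E} {g' : E} {s : ℝ}
    (hg : HasDerivAt g g' s) :
    HasDerivAt (fun t => Fu P (g t)) ((fderiv ℝ (Fu P) (g s)) g') s :=
  ((hP.differentiable one_ne_zero) (g s)).hasFDerivAt.comp_hasDerivAt s hg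

lemma derivB (hP : ContDiff ℝ 1 (Fu P)) (x1 x2 x3 x4 x5 x6 : ℝ) :
    deriv (fun y => P x1 y x3 x4 x5 x6) x2 = pB P x1 x2 x3 x4 x5 x6 := by
  have hg : HasDerivAt (fun y : ℝ => ((x1, y, x3, x4, x5, x6) : E)) (0,1,0,0,0,0) x2 :=
    (hasDerivAt_const _ _).prodMk ((hasDerivAt_id _).prodMk ((hasDerivAt_const _ _).prodMk
      ((hasDerivAt_const _ _).prodMk ((hasDerivAt_const _ _).prodMk (hasDerivAt_const _ _)))))
  exact (key_hasDerivAt hP hg).deriv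

lemma derivC (hP : ContDiff ℝ 1 (Fu P)) (x1 x2 x3 x4 x5 x6 : ℝ) :
    deriv (fun y => P x1 x2 y x4 x5 x6) x3 = pC P x1 x2 x3 x4 x5 x6 := by
  have hg : HasDerivAt (fun y : ℝ => ((x1, x2, y, x4, x5, x6) : E)) (0,0,1,0,0,0) x3 :=
    (hasDerivAt_const _ _).prodMk ((hasDerivAt_const _ _).prodMk ((hasDerivAt_id _).prodMk
      ((hasDerivAt_const _ _).prodMk ((hasDerivAt_const _ _).prodMk (hasDerivAt_const _ _)))))
  exact (key_hasDerivAt hP hg).deriv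

lemma derivD (hP : ContDiff ℝ 1 (Fu P)) (x1 x2 x3 x4 x5 x6 : ℝ) :
    deriv (fun y => P x1 x2 x3 y x5 x6) x4 = pD P x1 x2 x3 x4 x5 x6 := by
  have hg : HasDerivAt (fun y : ℝ => ((x1, x2, x3, y, x5, x6) : E)) (0,0,0,1,0,0) x4 :=
    (hasDerivAt_const _ _).prodMk ((hasDerivAt_const _ _).prodMk ((hasDerivAt_const _ _).prodMk
      ((hasDerivAt_id _).prodMk ((hasDerivAt_const _ _).prodMk (hasDerivAt_const _ _)))))
  exact (key_hasDerivAt hP hg).deriv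

lemma fderiv_apply_eq (v : E) (a b c d : ℝ) :
    fderiv ℝ (Fu P) v (a,b,c,d,0,0)
      = a * fderiv ℝ (Fu P) v (1,0,0,0,0,0) + b * fderiv ℝ (Fu P) v (0,1,0,0,0,0)
        + c * fderiv ℝ (Fu P) v (0,0,1,0,0,0) + d * fderiv ℝ (Fu P) v (0,0,0,1,0,0) := by
  have hv : ((a,b,c,d,(0:ℝ),(0:ℝ)) : E)
      = a • ((1,0,0,0,0,0) : E) + b • (0,1,0,0,0,0) + c • (0,0,1,0,0,0) + d • (0,0,0,1,0,0) := by
    simp [Prod.ext_iff]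
  rw [hv, map_add, map_add, map_add, map_smul, map_smul, map_smul, map_smul]
  simp [smul_eq_mul]

lemma DP_eq (hP : ContDiff ℝ 1 (Fu P)) (h t0 : ℝ) (Q W : ℕ → ℝ) (p : ℕ) :
    DP P h t0 Q W p
      = W p * pA P (Q p) (bD h Q p) (fD h Q p) (cD h Q p) (t0 + p*h) h
        + bD h W p * pB P (Q p) (bD h Q p) (fD h Q p) (cD h Q p) (t0 + p*h) h
        + fD h W p * pC P (Q p) (bD h Q p) (fD h Q p) (cD h Q p) (t0 + p*h) h
        + cD h W p * pD P (Q p) (bD h Q p) (fD h Q p) (cD h Q p) (t0 + p*h) h := by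
  have e2 : (fun s : ℝ => bD h (fun i => Q i + s * W i) p)
      = fun s : ℝ => bD h Q p + s * bD h W p := by
    funext s; simp only [bD]; ring
  have e3 : (fun s : ℝ => fD h (fun i => Q i + s * W i) p)
      = fun s : ℝ => fD h Q p + s * fD h W p := by
    funext s; simp only [fD]; ring
  have e4 : (fun s : ℝ => cD h (fun i => Q i + s * W i) p)
      = fun s : ℝ => cD h Q p + s * cD h W p := by
    funext s; simp only [cD]; ring
  have h1 : HasDerivAt (fun s : ℝ => Q p + s * W p) (W p) 0 := by
    simpa using ((hasDerivAt_id (0:ℝ)).mul_const (W p)).const_add (Q p)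
  have h2 : HasDerivAt (fun s : ℝ => bD h (fun i => Q i + s * W i) p) (bD h W p) 0 := by
    rw [e2]; simpa using ((hasDerivAt_id (0:ℝ)).mul_const (bD h W p)).const_add (bD h Q p)
  have h3 : HasDerivAt (fun s : ℝ => fD h (fun i => Q i + s * W i) p) (fD h W p) 0 := by
    rw [e3]; simpa using ((hasDerivAt_id (0:ℝ)).mul_const (fD h W p)).const_add (fD h Q p)
  have h4 : HasDerivAt (fun s : ℝ => cD h (fun i => Q i + s * W i) p) (cD h W p) 0 := by
    rw [e4]; simpa using ((hasDerivAt_id (0:ℝ)).mul_const (cD h W p)).const_add (cD h Q p)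
  have hg : HasDerivAt
      (fun s : ℝ => ((Q p + s * W p,
        bD h (fun i => Q i + s * W i) p,
        fD h (fun i => Q i + s * W i) p,
        cD h (fun i => Q i + s * W i) p,
        t0 + p * h, h) : E))
      ((W p, bD h W p, fD h W p, cD h W p, 0, 0)) 0 :=
    h1.prodMk (h2.prodMk (h3.prodMk (h4.prodMk ((hasDerivAt_const _ _).prodMk (hasDerivAt_const _ _)))))
  have hk := (key_hasDerivAt hP hg).deriv
  have hg0 : ((Q p + (0:ℝ) * W p,
        bD h (fun i => Q i + (0:ℝ) * W i) p,
        fD h (fun i => Q i + (0:ℝ) * W i) p,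
        cD h (fun i => Q i + (0:ℝ) * W i) p,
        t0 + p * h, h) : E)
      = (Q p, bD h Q p, fD h Q p, cD h Q p, t0 + p * h, h) := by
    simp [bD, fD, cD]
  rw [hg0] at hk
  exact hk.trans (fderiv_apply_eq _ _ _ _ _)

noncomputable def Wind : ℕ → ℝ := fun i => if i = 3 then 1 else 0
noncomputable def Zind : ℕ → ℝ := fun i => if i = 2 then 1 else 0

end SAH


open SAH in
/-- The Fréchet derivatives of a second order finite differences operator are all
self-adjoint if and only if the operator satisfies the discrete Helmholtz condition. -/
theorem selfadjoint_iff_discrete_helmholtz (P : ℝ → ℝ → ℝ → ℝ → ℝ → ℝ → ℝ)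
    (hP : ContDiff ℝ 1 (fun v : ℝ × ℝ × ℝ × ℝ × ℝ × ℝ =>
      P v.1 v.2.1 v.2.2.1 v.2.2.2.1 v.2.2.2.2.1 v.2.2.2.2.2)) :
    (∀ (h : ℝ), 0 < h → ∀ (t0 : ℝ) (N : ℕ), 4 ≤ N → ∀ Q W Z : ℕ → ℝ,
      W 0 = 0 → W 1 = 0 → W (N - 1) = 0 → W N = 0 →
      Z 0 = 0 → Z 1 = 0 → Z (N - 1) = 0 → Z N = 0 →
      h * ∑ p ∈ Finset.Icc 1 (N - 1), DP P h t0 Q W p * Z p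
        = h * ∑ p ∈ Finset.Icc 1 (N - 1), DP P h t0 Q Z p * W p)
    ↔ (∀ (h : ℝ), 0 < h → ∀ (t0 : ℝ) (N : ℕ), 4 ≤ N → ∀ Q : ℕ → ℝ,
        ∀ p ∈ Finset.Icc 2 (N - 1),
        (deriv (fun w => P (Q p) (bD h Q p) (fD h Q p) w (t0 + p * h) h) (cD h Q p)
          - deriv (fun w => P (Q (p - 1)) (bD h Q (p - 1)) (fD h Q (p - 1)) w
              (t0 + ((p : ℝ) - 1) * h) h) (cD h Q (p - 1))) / h
        = deriv (fun vm => P (Q p) vm (fD h Q p) (cD h Q p) (t0 + p * h) h) (bD h Q p)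
          + deriv (fun vp => P (Q (p - 1)) (bD h Q (p - 1)) vp (cD h Q (p - 1))
              (t0 + ((p : ℝ) - 1) * h) h) (fD h Q (p - 1))) := by
  have hP' : ContDiff ℝ 1 (Fu P) := hP
  constructor
  · -- self-adjoint → Helmholtz
    intro hsa h hh t0 N hN Q p hp
    have hne : h ≠ 0 := ne_of_gt hh
    obtain ⟨hp2, hpN⟩ := Finset.mem_Icc.mp hp
    have i1 : p + 1 - 3 = p - 2 := by omega
    have i2 : p + 2 - 3 = p - 1 := by omega
    have i3 : p + 3 - 3 = p := by omega
    have i4 : p + 4 - 3 = p + 1 := by omega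
    have j1 : p - 1 - 1 = p - 2 := by omega
    have j2 : p - 1 + 1 = p := by omega
    set t0' : ℝ := t0 + ((p : ℝ) - 3) * h with ht0'
    set Q' : ℕ → ℝ := fun i => Q (p + i - 3) with hQ'
    have key := hsa h hh t0' 5 (by norm_num) Q' Wind Zind
      (by norm_num [Wind]) (by norm_num [Wind]) (by norm_num [Wind]) (by norm_num [Wind])
      (by norm_num [Zind]) (by norm_num [Zind]) (by norm_num [Zind]) (by norm_num [Zind])
    rw [show (5:ℕ) - 1 = 4 from rfl] at key
    have hsum1 : ∑ q ∈ Finset.Icc 1 4, DP P h t0' Q' Wind q * Zind q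
        = DP P h t0' Q' Wind 2 := by
      have := Finset.sum_eq_single_of_mem (s := Finset.Icc 1 4)
        (f := fun q => DP P h t0' Q' Wind q * Zind q)
        2 (by decide) (fun b _ hb => by simp [Zind, hb])
      simpa [Zind] using this
    have hsum2 : ∑ q ∈ Finset.Icc 1 4, DP P h t0' Q' Zind q * Wind q
        = DP P h t0' Q' Zind 3 := by
      have := Finset.sum_eq_single_of_mem (s := Finset.Icc 1 4)
        (f := fun q => DP P h t0' Q' Zind q * Wind q)
        3 (by decide) (fun b _ hb => by simp [Wind, hb])
      simpa [Wind] using this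
    rw [hsum1, hsum2, DP_eq hP' h t0' Q' Wind 2, DP_eq hP' h t0' Q' Zind 3] at key
    have hw0 : Wind 2 = 0 := by norm_num [Wind]
    have hwb : bD h Wind 2 = 0 := by norm_num [bD, Wind]
    have hwf : fD h Wind 2 = 1/h := by norm_num [fD, Wind]
    have hwc : cD h Wind 2 = 1/h^2 := by norm_num [cD, Wind]
    have hz0 : Zind 3 = 0 := by norm_num [Zind]
    have hzb : bD h Zind 3 = -(1/h) := by norm_num [bD, Zind]; ring
    have hzf : fD h Zind 3 = 0 := by norm_num [fD, Zind]
    have hzc : cD h Zind 3 = 1/h^2 := by norm_num [cD, Zind]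
    have hq2 : Q' 2 = Q (p-1) := by simp only [hQ']; rw [i2]
    have hq3 : Q' 3 = Q p := by simp only [hQ']; rw [i3]
    have hbd2 : bD h Q' 2 = bD h Q (p-1) := by
      simp only [bD, hQ', j1]; norm_num [i1, i2]
    have hfd2 : fD h Q' 2 = fD h Q (p-1) := by
      simp only [fD, hQ', j2]; norm_num [i2, i3]
    have hcd2 : cD h Q' 2 = cD h Q (p-1) := by
      simp only [cD, hQ', j1, j2]; norm_num [i1, i2, i3]
    have hbd3 : bD h Q' 3 = bD h Q p := by
      simp only [bD, hQ']; norm_num [i2, i3]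
    have hfd3 : fD h Q' 3 = fD h Q p := by
      simp only [fD, hQ']; norm_num [i3, i4]
    have hcd3 : cD h Q' 3 = cD h Q p := by
      simp only [cD, hQ']; norm_num [i2, i3, i4]
    have ht2 : t0' + ((2:ℕ):ℝ) * h = t0 + ((p:ℝ) - 1) * h := by
      rw [ht0']; push_cast; ring
    have ht3 : t0' + ((3:ℕ):ℝ) * h = t0 + (p:ℝ) * h := by
      rw [ht0']; push_cast; ring
    rw [hw0, hwb, hwf, hwc, hz0, hzb, hzf, hzc, hq2, hq3, hbd2, hfd2, hcd2,
      hbd3, hfd3, hcd3, ht2, ht3] at key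
    have key' := mul_left_cancel₀ hne key
    rw [derivD hP', derivD hP', derivB hP', derivC hP']
    field_simp [hne] at key' ⊢
    refine mul_right_cancel₀ hne ?_
    linear_combination -h * key'
  · -- Helmholtz → self-adjoint
    intro hH h hh t0 N hN Q W Z hW0 hW1 hWn1 hWn hZ0 hZ1 hZn1 hZn
    have hne : h ≠ 0 := ne_of_gt hh
    set vA : ℕ → ℝ := fun q => pA P (Q q) (bD h Q q) (fD h Q q) (cD h Q q) (t0 + q*h) h with hvA
    set vB : ℕ → ℝ := fun q => pB P (Q q) (bD h Q q) (fD h Q q) (cD h Q q) (t0 + q*h) h with hvB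
    set vC : ℕ → ℝ := fun q => pC P (Q q) (bD h Q q) (fD h Q q) (cD h Q q) (t0 + q*h) h with hvC
    set vD : ℕ → ℝ := fun q => pD P (Q q) (bD h Q q) (fD h Q q) (cD h Q q) (t0 + q*h) h with hvD
    set u : ℕ → ℝ := fun q => W (q-1) * Z q - Z (q-1) * W q with hu
    set al : ℕ → ℝ := fun q => -(vB q)/h + vD q/h^2 with hal
    set be : ℕ → ℝ := fun q => vC q/h + vD q/h^2 with hbe
    have hterm : ∀ q, DP P h t0 Q W q * Z q - DP P h t0 Q Z q * W q
        = al q * u q - be q * u (q+1) := by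
      intro q
      rw [DP_eq hP' h t0 Q W q, DP_eq hP' h t0 Q Z q]
      simp only [hal, hbe, hu, hvA, hvB, hvC, hvD, bD, fD, cD, Nat.add_sub_cancel]
      ring
    have hdiff : ∑ q ∈ Finset.Icc 1 (N-1), DP P h t0 Q W q * Z q
        - ∑ q ∈ Finset.Icc 1 (N-1), DP P h t0 Q Z q * W q
        = ∑ q ∈ Finset.Icc 1 (N-1), (al q * u q - be q * u (q+1)) := by
      rw [← Finset.sum_sub_distrib]
      exact Finset.sum_congr rfl (fun q _ => hterm q)
    have hre : ∑ q ∈ Finset.Icc 1 (N-1), be q * u (q+1)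
        = ∑ q ∈ Finset.Icc 2 N, be (q-1) * u q := by
      have hmap : Finset.Icc 2 N = (Finset.Icc 1 (N-1)).map (addRightEmbedding 1) := by
        rw [Finset.map_add_right_Icc]
        congr 1 <;> omega
      rw [hmap, Finset.sum_map]
      exact Finset.sum_congr rfl (fun q _ => by
        simp [addRightEmbedding, Nat.add_sub_cancel])
    have hins1 : Finset.Icc 1 (N-1) = insert 1 (Finset.Icc 2 (N-1)) := by
      ext a; simp only [Finset.mem_Icc, Finset.mem_insert]; omega
    have hins2 : Finset.Icc 2 N = insert N (Finset.Icc 2 (N-1)) := by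
      ext a; simp only [Finset.mem_Icc, Finset.mem_insert]; omega
    have hnot1 : (1:ℕ) ∉ Finset.Icc 2 (N-1) := by simp
    have hnotN : N ∉ Finset.Icc 2 (N-1) := by
      simp only [Finset.mem_Icc]; omega
    have hu1 : u 1 = 0 := by simp [hu, hW1, hZ1, hW0, hZ0]
    have huN : u N = 0 := by simp [hu, hWn, hZn, hWn1, hZn1]
    have hzero : ∀ q ∈ Finset.Icc 2 (N-1), al q = be (q-1) := by
      intro q hq
      obtain ⟨hq2, hqN⟩ := Finset.mem_Icc.mp hq
      have hHq := hH h hh t0 N hN Q q hq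
      rw [derivD hP', derivD hP', derivB hP', derivC hP'] at hHq
      have hc : ((q-1 : ℕ):ℝ) = (q:ℝ) - 1 := by
        have h1 : 1 ≤ q := by omega
        push_cast [h1]; ring
      simp only [hal, hbe, hvB, hvC, hvD, hc]
      field_simp [hne] at hHq ⊢
      linear_combination hHq
    have hsz : ∑ q ∈ Finset.Icc 1 (N-1), (al q * u q - be q * u (q+1)) = 0 := by
      rw [Finset.sum_sub_distrib, hre, hins1, hins2,
        Finset.sum_insert hnot1, Finset.sum_insert hnotN, hu1, huN]
      rw [mul_zero, mul_zero, zero_add, zero_add, ← Finset.sum_sub_distrib]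
      apply Finset.sum_eq_zero
      intro q hq
      rw [hzero q hq]
      ring
    have := hdiff.trans hsz
    have h2 : ∑ q ∈ Finset.Icc 1 (N-1), DP P h t0 Q W q * Z q
        = ∑ q ∈ Finset.Icc 1 (N-1), DP P h t0 Q Z q * W q := by linarith
    rw [h2]
end

section
/- Let L₋, L₊ : ℝ³ × ℝ₊* → ℝ be C¹ Lagrangians, and suppose there exist f : ℝ² × ℝ₊* → ℝ and g : ℝ × ℝ₊* → ℝ such that for every h > 0, every N ≥ 4, every t_0 ∈ ℝ, every Q ∈ ℝ^{N+1} and every p = 1,…,N: L₋(Q_p,(Δ₋Q)_p,t_p,h) + L₊(Q_{p-1},(-Δ₊Q)_{p-1},t_{p-1},h) = (f(Q_p,t_p,h) − f(Q_{p-1},t_{p-1},h))/h + g(t_p,h). Then (L₋,L₊) is a null couple of Lagrangians: the associated second order discrete Euler-Lagrange equation ∂L₋/∂x(∗_p) + ∂L₊/∂x(∗∗_p) + (Δ₊(∂L₋/∂v(∗)))_p − (Δ₋(∂L₊/∂v(∗∗)))_p = 0 holds for every Q ∈ ℝ^{N+1} and every p = 1,…,N-1. -/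
private lemma key_hasDerivAt (F : ℝ × ℝ × ℝ × ℝ → ℝ) (hF : Differentiable ℝ F)
    {g1 g2 : ℝ → ℝ} {d1 d2 : ℝ} (t h x : ℝ)
    (h1 : HasDerivAt g1 d1 x) (h2 : HasDerivAt g2 d2 x) :
    HasDerivAt (fun y => F (g1 y, g2 y, t, h))
      (fderiv ℝ F (g1 x, g2 x, t, h) (d1, d2, 0, 0)) x := by
  have hpath : HasDerivAt (fun y => ((g1 y, g2 y, t, h) : ℝ × ℝ × ℝ × ℝ))
      ((d1, d2, 0, 0) : ℝ × ℝ × ℝ × ℝ) x :=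
    h1.prodMk (h2.prodMk ((hasDerivAt_const x t).prodMk (hasDerivAt_const x h)))
  exact (hF _).hasFDerivAt.comp_hasDerivAt x hpath

private lemma lin_apply (L : ℝ × ℝ × ℝ × ℝ →L[ℝ] ℝ) (c1 c2 : ℝ) :
    L (c1, c2, 0, 0) = c1 * L (1, 0, 0, 0) + c2 * L (0, 1, 0, 0) := by
  have : ((c1, c2, 0, 0) : ℝ × ℝ × ℝ × ℝ)
      = c1 • ((1, 0, 0, 0) : ℝ × ℝ × ℝ × ℝ) + c2 • ((0, 1, 0, 0) : ℝ × ℝ × ℝ × ℝ) := by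
    simp [Prod.ext_iff]
  rw [this, map_add, map_smul, map_smul, smul_eq_mul, smul_eq_mul]

/-- If the couple of Lagrangians combines pointwise into a discrete total
derivative plus a function of time, then it is a null couple of Lagrangians:
the discrete Euler-Lagrange equation holds identically. -/
theorem null_lagrangian_sufficiency (Lm Lp : ℝ → ℝ → ℝ → ℝ → ℝ)
    (hLm : ContDiff ℝ 1 (fun v : ℝ × ℝ × ℝ × ℝ => Lm v.1 v.2.1 v.2.2.1 v.2.2.2))
    (hLp : ContDiff ℝ 1 (fun v : ℝ × ℝ × ℝ × ℝ => Lp v.1 v.2.1 v.2.2.1 v.2.2.2))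
    (f : ℝ → ℝ → ℝ → ℝ) (g : ℝ → ℝ → ℝ)
    (hfg : ∀ (h : ℝ), 0 < h → ∀ (N : ℕ), 4 ≤ N → ∀ (t0 : ℝ) (Q : ℕ → ℝ),
      ∀ p ∈ Finset.Icc 1 N,
      Lm (Q p) (bD h Q p) (t0 + p * h) h
        + Lp (Q (p - 1)) (fD h Q (p - 1)) (t0 + ((p : ℝ) - 1) * h) h
      = (f (Q p) (t0 + p * h) h - f (Q (p - 1)) (t0 + ((p : ℝ) - 1) * h) h) / h
        + g (t0 + p * h) h) :
    ∀ (h : ℝ), 0 < h → ∀ (N : ℕ), 4 ≤ N → ∀ (t0 : ℝ) (Q : ℕ → ℝ),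
      ∀ p ∈ Finset.Icc 1 (N - 1),
      deriv (fun x => Lm x (bD h Q p) (t0 + p * h) h) (Q p)
      + deriv (fun x => Lp x (fD h Q p) (t0 + p * h) h) (Q p)
      + (deriv (fun v => Lm (Q p) v (t0 + p * h) h) (bD h Q p)
          - deriv (fun v => Lm (Q (p + 1)) v (t0 + (p + 1 : ℕ) * h) h) (bD h Q (p + 1))) / h
      - (deriv (fun v => Lp (Q p) v (t0 + p * h) h) (fD h Q p)
          - deriv (fun v => Lp (Q (p - 1)) v (t0 + ((p : ℝ) - 1) * h) h) (fD h Q (p - 1))) / h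
      = 0 := by
  intro h hh N hN t0 Q p hp
  simp only [Finset.mem_Icc] at hp
  obtain ⟨hp1, hp2⟩ := hp
  have hne : h ≠ 0 := ne_of_gt hh
  set Fm : ℝ × ℝ × ℝ × ℝ → ℝ := fun v => Lm v.1 v.2.1 v.2.2.1 v.2.2.2 with hFm
  set Fp : ℝ × ℝ × ℝ × ℝ → ℝ := fun v => Lp v.1 v.2.1 v.2.2.1 v.2.2.2 with hFp
  have hFmd : Differentiable ℝ Fm := hLm.differentiable one_ne_zero
  have hFpd : Differentiable ℝ Fp := hLp.differentiable one_ne_zero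
  set a := Q (p - 1) with ha
  set b := Q (p + 1) with hb
  set tp : ℝ := t0 + p * h with htp
  set tm : ℝ := t0 + ((p : ℝ) - 1) * h with htm
  set tq : ℝ := t0 + ((p : ℝ) + 1) * h with htq
  -- the variation function
  set F : ℝ → ℝ := fun x => Lm x ((x - a) / h) tp h + Lp a ((x - a) / h) tm h
      + Lm b ((b - x) / h) tq h + Lp x ((b - x) / h) tp h with hF
  -- F is constant
  have hconst : ∀ x, F x = (f b tq h - f a tm h) / h + g tp h + g tq h := by
    intro x
    set Q' : ℕ → ℝ := Function.update Q p x with hQ'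
    have hQ'p : Q' p = x := Function.update_self p x Q
    have hQ'm : Q' (p - 1) = a := by
      rw [hQ', Function.update_of_ne (by omega)]
    have hQ'b : Q' (p + 1) = b := by
      rw [hQ', Function.update_of_ne (by omega)]
    have e1 := hfg h hh N hN t0 Q' p (Finset.mem_Icc.mpr ⟨hp1, by omega⟩)
    have e2 := hfg h hh N hN t0 Q' (p + 1) (Finset.mem_Icc.mpr ⟨by omega, by omega⟩)
    simp only [bD, fD, show p - 1 + 1 = p from by omega, show p + 1 - 1 = p from by omega,
      hQ'p, hQ'm, hQ'b, Nat.cast_add, Nat.cast_one, add_sub_cancel_right,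
      ← htp, ← htm, ← htq] at e1 e2
    simp only [hF, ← htp, ← htm, ← htq]
    linear_combination e1 + e2
  have hFconst : F = fun _ => (f b tq h - f a tm h) / h + g tp h + g tq h := funext hconst
  -- derivative of F at Q p
  have dA := key_hasDerivAt Fm hFmd tp h (Q p) (hasDerivAt_id (Q p))
    (((hasDerivAt_id (Q p)).sub_const a).div_const h)
  have dB := key_hasDerivAt Fp hFpd tm h (Q p) (hasDerivAt_const (Q p) a)
    (((hasDerivAt_id (Q p)).sub_const a).div_const h)
  have dC := key_hasDerivAt Fm hFmd tq h (Q p) (hasDerivAt_const (Q p) b)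
    (((hasDerivAt_const (Q p) b).sub (hasDerivAt_id (Q p))).div_const h)
  have dD := key_hasDerivAt Fp hFpd tp h (Q p) (hasDerivAt_id (Q p))
    (((hasDerivAt_const (Q p) b).sub (hasDerivAt_id (Q p))).div_const h)
  have hFd : HasDerivAt F
      (fderiv ℝ Fm (Q p, (Q p - a) / h, tp, h) (1, 1 / h, 0, 0)
        + fderiv ℝ Fp (a, (Q p - a) / h, tm, h) (0, 1 / h, 0, 0)
        + fderiv ℝ Fm (b, (b - Q p) / h, tq, h) (0, (0 - 1) / h, 0, 0)
        + fderiv ℝ Fp (Q p, (b - Q p) / h, tp, h) (1, (0 - 1) / h, 0, 0)) (Q p) := by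
    exact ((dA.add dB).add dC).add dD
  have hzero : (fderiv ℝ Fm (Q p, (Q p - a) / h, tp, h) (1, 1 / h, 0, 0)
        + fderiv ℝ Fp (a, (Q p - a) / h, tm, h) (0, 1 / h, 0, 0)
        + fderiv ℝ Fm (b, (b - Q p) / h, tq, h) (0, (0 - 1) / h, 0, 0)
        + fderiv ℝ Fp (Q p, (b - Q p) / h, tp, h) (1, (0 - 1) / h, 0, 0)) = 0 := by
    rw [← hFd.deriv, hFconst]
    simp
  -- identify the discrete difference quotients
  have hbDp : bD h Q p = (Q p - a) / h := rfl
  have hbDq : bD h Q (p + 1) = (b - Q p) / h := by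
    simp only [bD, show p + 1 - 1 = p from by omega, hb]
  have hfDp : fD h Q p = (b - Q p) / h := rfl
  have hfDm : fD h Q (p - 1) = (Q p - a) / h := by
    simp only [fD, show p - 1 + 1 = p from by omega, ha]
  -- rewrite the goal's partial derivatives as fderiv applications
  have g1 : deriv (fun x => Lm x (bD h Q p) tp h) (Q p)
      = fderiv ℝ Fm (Q p, (Q p - a) / h, tp, h) (1, 0, 0, 0) := by
    rw [hbDp]
    exact (key_hasDerivAt Fm hFmd tp h (Q p) (hasDerivAt_id (Q p))
      (hasDerivAt_const (Q p) ((Q p - a) / h))).deriv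
  have g2 : deriv (fun x => Lp x (fD h Q p) tp h) (Q p)
      = fderiv ℝ Fp (Q p, (b - Q p) / h, tp, h) (1, 0, 0, 0) := by
    rw [hfDp]
    exact (key_hasDerivAt Fp hFpd tp h (Q p) (hasDerivAt_id (Q p))
      (hasDerivAt_const (Q p) ((b - Q p) / h))).deriv
  have g3 : deriv (fun v => Lm (Q p) v tp h) (bD h Q p)
      = fderiv ℝ Fm (Q p, (Q p - a) / h, tp, h) (0, 1, 0, 0) := by
    rw [hbDp]
    exact (key_hasDerivAt Fm hFmd tp h ((Q p - a) / h) (hasDerivAt_const _ (Q p))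
      (hasDerivAt_id _)).deriv
  have g4 : deriv (fun v => Lm b v (t0 + ((p : ℕ) + 1 : ℕ) * h) h) (bD h Q (p + 1))
      = fderiv ℝ Fm (b, (b - Q p) / h, tq, h) (0, 1, 0, 0) := by
    have hcast : (t0 + ((p : ℕ) + 1 : ℕ) * h) = tq := by push_cast [htq]; ring
    rw [hbDq, hcast]
    exact (key_hasDerivAt Fm hFmd tq h ((b - Q p) / h) (hasDerivAt_const _ b)
      (hasDerivAt_id _)).deriv
  have g5 : deriv (fun v => Lp (Q p) v tp h) (fD h Q p)
      = fderiv ℝ Fp (Q p, (b - Q p) / h, tp, h) (0, 1, 0, 0) := by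
    rw [hfDp]
    exact (key_hasDerivAt Fp hFpd tp h ((b - Q p) / h) (hasDerivAt_const _ (Q p))
      (hasDerivAt_id _)).deriv
  have g6 : deriv (fun v => Lp a v tm h) (fD h Q (p - 1))
      = fderiv ℝ Fp (a, (Q p - a) / h, tm, h) (0, 1, 0, 0) := by
    rw [hfDm]
    exact (key_hasDerivAt Fp hFpd tm h ((Q p - a) / h) (hasDerivAt_const _ a)
      (hasDerivAt_id _)).deriv
  rw [g1, g2, g3, g4, g5, g6]
  rw [lin_apply (fderiv ℝ Fm (Q p, (Q p - a) / h, tp, h)) 1 (1 / h),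
    lin_apply (fderiv ℝ Fp (a, (Q p - a) / h, tm, h)) 0 (1 / h),
    lin_apply (fderiv ℝ Fm (b, (b - Q p) / h, tq, h)) 0 ((0 - 1) / h),
    lin_apply (fderiv ℝ Fp (Q p, (b - Q p) / h, tp, h)) 1 ((0 - 1) / h)] at hzero
  linear_combination hzero
end

section
/- Let h > 0 and consider the operator P̄(x,v₋,v₊,w,t,ξ) = x + sin((1-λ)v₋ + λv₊)·w with λ = 1/2 (direct centered discretization of q + sin(q̇)q̈ = 0). Then P̄ does not satisfy the discrete Helmholtz condition: there exist N ≥ 4, Q ∈ ℝ^{N+1}, and p with 2 ≤ p ≤ N-1 such that (Δ₋(∂P̄/∂w(⋆)))_p ≠ ∂P̄/∂v₋(⋆_p) + ∂P̄/∂v₊(⋆_{p-1}), where ⋆_p = (Q_p,(Δ₋Q)_p,(-Δ₊Q)_p,(-Δ₊∘Δ₋Q)_p,t_p,h). -/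
/-- The operator of the direct centered discretization (`λ = 1/2`) of
`q + sin(q̇) q̈ = 0`. -/
noncomputable def Psin (x vm vp w t ξ : ℝ) : ℝ :=
  x + Real.sin ((1 - (1/2 : ℝ)) * vm + (1/2 : ℝ) * vp) * w

lemma deriv_Psin_w (x vm vp t ξ w0 : ℝ) :
    deriv (fun w => Psin x vm vp w t ξ) w0
      = Real.sin ((1 - (1/2 : ℝ)) * vm + (1/2 : ℝ) * vp) := by
  have : HasDerivAt (fun w => Psin x vm vp w t ξ)
      (Real.sin ((1 - (1/2 : ℝ)) * vm + (1/2 : ℝ) * vp)) w0 := by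
    simpa [Psin] using
      (((hasDerivAt_id w0).const_mul
        (Real.sin ((1 - (1/2 : ℝ)) * vm + (1/2 : ℝ) * vp))).const_add x)
  simpa using this.deriv

lemma deriv_Psin_vm (x vp w t ξ a : ℝ) :
    deriv (fun vm => Psin x vm vp w t ξ) a
      = Real.cos ((1 - (1/2 : ℝ)) * a + (1/2 : ℝ) * vp) * (1 - (1/2 : ℝ)) * w := by
  have h1 : HasDerivAt (fun vm : ℝ => (1 - (1/2 : ℝ)) * vm + (1/2 : ℝ) * vp)
      (1 - (1/2 : ℝ)) a := by
    simpa using ((hasDerivAt_id a).const_mul (1 - (1/2 : ℝ))).add_const ((1/2 : ℝ) * vp)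
  have h2 := (Real.hasDerivAt_sin ((1 - (1/2 : ℝ)) * a + (1/2 : ℝ) * vp)).comp a h1
  have h3 := (h2.mul_const w).const_add x
  have : HasDerivAt (fun vm => Psin x vm vp w t ξ)
      (Real.cos ((1 - (1/2 : ℝ)) * a + (1/2 : ℝ) * vp) * (1 - (1/2 : ℝ)) * w) a := by
    simpa [Psin, Function.comp] using h3
  simpa using this.deriv

lemma deriv_Psin_vp (x vm w t ξ a : ℝ) :
    deriv (fun vp => Psin x vm vp w t ξ) a
      = Real.cos ((1 - (1/2 : ℝ)) * vm + (1/2 : ℝ) * a) * (1/2 : ℝ) * w := by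
  have h1 : HasDerivAt (fun vp : ℝ => (1 - (1/2 : ℝ)) * vm + (1/2 : ℝ) * vp)
      (1/2 : ℝ) a := by
    simpa using (((hasDerivAt_id a).const_mul ((1/2 : ℝ))).const_add ((1 - (1/2 : ℝ)) * vm))
  have h2 := (Real.hasDerivAt_sin ((1 - (1/2 : ℝ)) * vm + (1/2 : ℝ) * a)).comp a h1
  have h3 := (h2.mul_const w).const_add x
  have : HasDerivAt (fun vp => Psin x vm vp w t ξ)
      (Real.cos ((1 - (1/2 : ℝ)) * vm + (1/2 : ℝ) * a) * (1/2 : ℝ) * w) a := by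
    simpa [Psin, Function.comp] using h3
  simpa using this.deriv

/-- The direct centered discretization of `q + sin(q̇) q̈ = 0` does not satisfy
the discrete Helmholtz condition. -/
theorem direct_discretization_not_helmholtz (h : ℝ) (hh : 0 < h) :
    ∃ (N : ℕ), 4 ≤ N ∧ ∃ (Q : ℕ → ℝ) (t0 : ℝ) (p : ℕ), 2 ≤ p ∧ p ≤ N - 1 ∧
      (deriv (fun w => Psin (Q p) (bD h Q p) (fD h Q p) w (t0 + p * h) h) (cD h Q p)
        - deriv (fun w => Psin (Q (p - 1)) (bD h Q (p - 1)) (fD h Q (p - 1)) w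
            (t0 + ((p : ℝ) - 1) * h) h) (cD h Q (p - 1))) / h
      ≠ deriv (fun vm => Psin (Q p) vm (fD h Q p) (cD h Q p) (t0 + p * h) h) (bD h Q p)
        + deriv (fun vp => Psin (Q (p - 1)) (bD h Q (p - 1)) vp (cD h Q (p - 1))
            (t0 + ((p : ℝ) - 1) * h) h) (fD h Q (p - 1)) := by
  have hne : h ≠ 0 := ne_of_gt hh
  refine ⟨4, le_refl _, fun n => if n = 0 then -(h * Real.pi) else 0, 0, 2,
    le_refl _, by norm_num, ?_⟩
  set Q : ℕ → ℝ := fun n => if n = 0 then -(h * Real.pi) else 0 with hQ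
  have hQ0 : Q 0 = -(h * Real.pi) := by simp [hQ]
  have hQ1 : Q 1 = 0 := by simp [hQ]
  have hQ2 : Q 2 = 0 := by simp [hQ]
  have hQ3 : Q 3 = 0 := by simp [hQ]
  have hb2 : bD h Q 2 = 0 := by simp [bD, hQ1, hQ2]
  have hf2 : fD h Q 2 = 0 := by simp [fD, hQ2, hQ3]
  have hc2 : cD h Q 2 = 0 := by simp [cD, hQ1, hQ2, hQ3]
  have hb1 : bD h Q 1 = Real.pi := by
    simp only [bD]
    norm_num [hQ0, hQ1]
    field_simp
  have hf1 : fD h Q 1 = 0 := by simp [fD, hQ1, hQ2]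
  have hc1 : cD h Q 1 = -(Real.pi / h) := by
    simp only [cD, hQ0, hQ1, hQ2]
    field_simp
    ring
  rw [deriv_Psin_w, deriv_Psin_w, deriv_Psin_vm, deriv_Psin_vp]
  norm_num [hb2, hf2, hc2, hb1, hf1, hc1]
  rw [show (1:ℝ) / 2 * Real.pi = Real.pi / 2 by ring]
  rw [Real.sin_pi_div_two, Real.cos_pi_div_two]
  simp [hne]
end
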